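/- For all positive integers n ≥ 2 and 1 ≤ m ≤ n, we have (n/(n-1))^n · ∑_{r=m}^{n} (r/n) · (n_[r]/n^r) · D_{r-m}/(r-m)! = n_[m]/(n-1)^m, where n_[r] = n(n-1)⋯(n-r+1) is the falling factorial and D_k = k! · ∑_{j=0}^{k} (-1)^j/j! is the number of derangements of k objects. -/

import Mathlib

open Finset

/-- Derangement number `D k = k! * ∑_{j=0}^k (-1)^j/j!`, as a real number. -/
noncomputable def derNum (k : ℕ) : ℝ :=
  (k.factorial : ℝ) * ∑ j ∈ Finset.range (k + 1), (-1 : ℝ) ^ j / (j.factorial : ℝ)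

lemma B1 (x : ℝ) (N : ℕ) :
    ∑ k ∈ range (N+1), (N.choose k : ℝ) * (-1)^k * x^(N-k) = (x-1)^N := by
  have h := add_pow x (-1 : ℝ) N
  rw [← Finset.sum_range_reflect] at h
  have hx : x + -1 = x - 1 := by ring
  rw [hx] at h
  rw [h]
  refine Finset.sum_congr rfl fun k hk => ?_
  rw [Finset.mem_range] at hk
  have hk' : k ≤ N := by omega
  have h1 : N + 1 - 1 - k = N - k := by omega
  rw [h1, Nat.choose_symm hk']
  have h2 : N - (N - k) = k := by omega
  rw [h2]
  ring

lemma B2 (x : ℝ) (N : ℕ) :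
    ∑ k ∈ range (N+1), (k:ℝ) * (N.choose k) * (-1)^k * x^(N-k)
      = -(N:ℝ) * (x-1)^(N-1) := by
  cases N with
  | zero => simp
  | succ M =>
    rw [Finset.sum_range_succ']
    have : ∀ i ∈ range (M+1),
        ((i+1 : ℕ):ℝ) * ((M+1).choose (i+1)) * (-1)^(i+1) * x^(M+1-(i+1))
        = (-((M:ℝ)+1)) * ((M.choose i : ℝ) * (-1)^i * x^(M-i)) := by
      intro i hi
      have hc := Nat.add_one_mul_choose_eq M i
      have hc' : ((M:ℝ)+1) * (M.choose i) = ((M+1).choose (i+1)) * ((i:ℝ)+1) := by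
        exact_mod_cast hc
      have h1 : M + 1 - (i+1) = M - i := by omega
      rw [h1]
      push_cast
      linear_combination (-1:ℝ)^i * x^(M-i) * hc'
    rw [Finset.sum_congr rfl this, ← Finset.mul_sum, B1]
    simp

lemma B3 (x c : ℝ) (N : ℕ) :
    ∑ k ∈ range (N+1), (c + k) * (N.choose k) * (-1)^k * x^(N-k)
      = c * (x-1)^N - (N:ℝ) * (x-1)^(N-1) := by
  have : ∀ k ∈ range (N+1), (c + (k:ℝ)) * (N.choose k) * (-1)^k * x^(N-k)
      = c * ((N.choose k : ℝ) * (-1)^k * x^(N-k))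
        + (k:ℝ) * (N.choose k) * (-1)^k * x^(N-k) := by
    intro k _; ring
  rw [Finset.sum_congr rfl this, Finset.sum_add_distrib, ← Finset.mul_sum, B1, B2]
  ring

lemma descFactorial_add_right (n m : ℕ) : ∀ k, n.descFactorial (m + k)
    = n.descFactorial m * (n - m).descFactorial k := by
  intro k
  induction k with
  | zero => simp
  | succ k ih =>
    rw [← Nat.add_assoc, Nat.descFactorial_succ, ih, Nat.descFactorial_succ]
    have : n - (m + k) = n - m - k := by omega
    rw [this]; ring

lemma Tc (n m : ℕ) (hm1 : 1 ≤ m) (hmn : m ≤ n) :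
    ∑ r ∈ Icc m n, (r:ℝ) * (n.descFactorial r) * ((-1)^(r-m) / ((r-m).factorial : ℝ))
        * (n:ℝ)^(n-r)
    = (n:ℝ) * (n.descFactorial m) * ((n:ℝ)-1)^(n-m)
      - (n:ℝ) * (n.descFactorial (m+1)) * ((n:ℝ)-1)^(n-m-1) := by
  have hrange : n + 1 - m = (n - m) + 1 := by omega
  rw [← Finset.Ico_add_one_right_eq_Icc, Finset.sum_Ico_eq_sum_range, hrange]
  set N := n - m with hN
  have hstep : ∀ i ∈ range (N+1),
      ((m+i : ℕ):ℝ) * (n.descFactorial (m+i)) * ((-1)^((m+i)-m) / (((m+i)-m).factorial : ℝ))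
        * (n:ℝ)^(n-(m+i))
      = (n.descFactorial m : ℝ) * ((((m:ℝ)) + i) * (N.choose i) * (-1)^i * (n:ℝ)^(N-i)) := by
    intro i hi
    have h1 : m + i - m = i := by omega
    have h2 : n - (m + i) = N - i := by omega
    rw [h1, h2, descFactorial_add_right, Nat.descFactorial_eq_factorial_mul_choose (n-m) i, ← hN]
    have hfac : ((i.factorial : ℕ) : ℝ) ≠ 0 := Nat.cast_ne_zero.2 i.factorial_ne_zero
    push_cast
    field_simp
  rw [Finset.sum_congr rfl hstep, ← Finset.mul_sum, B3]
  -- now algebra: dm * (m*(x-1)^N - N*(x-1)^(N-1)) = n*dm*(x-1)^N - n*d(m+1)*(x-1)^(N-1)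
  have hd : (n.descFactorial (m+1) : ℝ) = ((n:ℝ) - m) * (n.descFactorial m) := by
    rw [Nat.descFactorial_succ]
    push_cast [Nat.cast_sub hmn]
    ring
  have hNc : ((N:ℕ):ℝ) = (n:ℝ) - m := by
    push_cast [Nat.cast_sub hmn]; rw [hN, Nat.cast_sub hmn]
  rw [hd, hNc]
  rcases eq_or_lt_of_le hmn with heq | hlt
  · subst heq
    have : N = 0 := by omega
    rw [this]
    norm_num
    ring
  · have h3 : (N-1) + 1 = N := by omega
    have hpow := pow_succ ((n:ℝ)-1) (N-1)
    rw [h3] at hpow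
    rw [hpow]
    have hnm : n - m - 1 = N - 1 := rfl
    ring

lemma derNum_div (k : ℕ) : derNum k / (k.factorial : ℝ)
    = ∑ j ∈ Finset.range (k + 1), (-1 : ℝ) ^ j / (j.factorial : ℝ) := by
  rw [derNum, mul_div_cancel_left₀]
  exact Nat.cast_ne_zero.2 k.factorial_ne_zero

lemma derNum_zero : derNum 0 = 1 := by simp [derNum]

lemma derNum_step (k : ℕ) (hk : 1 ≤ k) :
    derNum k / (k.factorial : ℝ)
    = derNum (k-1) / ((k-1).factorial : ℝ) + (-1:ℝ)^k / (k.factorial : ℝ) := by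
  obtain ⟨j, rfl⟩ : ∃ j, k = j + 1 := ⟨k - 1, by omega⟩
  rw [derNum_div, derNum_div, Nat.add_sub_cancel, Finset.sum_range_succ]

lemma key (n : ℕ) (hn : 2 ≤ n) : ∀ d m, 1 ≤ m → m + d = n →
    ∑ r ∈ Icc m n, (r:ℝ) * (n.descFactorial r)
        * (derNum (r-m) / ((r-m).factorial : ℝ)) * (n:ℝ)^(n-r)
    = (n:ℝ) * (n.descFactorial m) * ((n:ℝ)-1)^(n-m) := by
  intro d
  induction d with
  | zero =>
    intro m hm1 hmn
    have : m = n := by omega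
    subst this
    simp [derNum_zero]
  | succ d ih =>
    intro m hm1 hmd
    have hmn : m + 1 ≤ n := by omega
    have hins : Icc m n = insert m (Icc (m+1) n) := by
      ext x; simp only [mem_Icc, mem_insert]; omega
    have hnotmem : m ∉ Icc (m+1) n := by simp
    rw [hins, Finset.sum_insert hnotmem]
    have hsplit : ∀ r ∈ Icc (m+1) n,
        (r:ℝ) * (n.descFactorial r) * (derNum (r-m) / ((r-m).factorial : ℝ)) * (n:ℝ)^(n-r)
        = (r:ℝ) * (n.descFactorial r) * (derNum (r-(m+1)) / ((r-(m+1)).factorial : ℝ)) * (n:ℝ)^(n-r)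
          + (r:ℝ) * (n.descFactorial r) * ((-1:ℝ)^(r-m) / ((r-m).factorial : ℝ)) * (n:ℝ)^(n-r) := by
      intro r hr
      rw [mem_Icc] at hr
      have h1 : 1 ≤ r - m := by omega
      have h2 : r - m - 1 = r - (m+1) := by omega
      rw [derNum_step (r-m) h1, h2]
      ring
    rw [Finset.sum_congr rfl hsplit, Finset.sum_add_distrib, ih (m+1) (by omega) (by omega)]
    have hT := Tc n m hm1 (by omega)
    rw [hins, Finset.sum_insert hnotmem] at hT
    have hmm : m - m = 0 := by omega
    rw [hmm] at hT
    simp only [Nat.sub_self, pow_zero, Nat.factorial_zero, Nat.cast_one, derNum_zero] at hT ⊢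
    have hnm1 : n - m - 1 = n - (m+1) := by omega
    rw [hnm1] at hT
    linarith [hT]

theorem stmt_0 (n m : ℕ) (hn : 2 ≤ n) (hm1 : 1 ≤ m) (hmn : m ≤ n) :
    ((n : ℝ) / ((n : ℝ) - 1)) ^ n *
      ∑ r ∈ Finset.Icc m n,
        ((r : ℝ) / n) * ((n.descFactorial r : ℝ) / (n : ℝ) ^ r) *
          (derNum (r - m) / ((r - m).factorial : ℝ))
    = (n.descFactorial m : ℝ) / ((n : ℝ) - 1) ^ m := by
  have hn0 : (n:ℝ) ≠ 0 := by
    have : (0:ℝ) < n := by exact_mod_cast (by omega : 0 < n)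
    linarith
  have hn2 : (2:ℝ) ≤ (n:ℝ) := by exact_mod_cast hn
  have hn1 : ((n:ℝ) - 1) ≠ 0 := by linarith
  have hkey := key n hn (n - m) m hm1 (by omega)
  have hsum : ∑ r ∈ Finset.Icc m n,
        ((r : ℝ) / n) * ((n.descFactorial r : ℝ) / (n : ℝ) ^ r) *
          (derNum (r - m) / ((r - m).factorial : ℝ))
      = (∑ r ∈ Icc m n, (r:ℝ) * (n.descFactorial r)
          * (derNum (r-m) / ((r-m).factorial : ℝ)) * (n:ℝ)^(n-r)) / (n:ℝ)^(n+1) := by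
    rw [Finset.sum_div]
    refine Finset.sum_congr rfl fun r hr => ?_
    rw [mem_Icc] at hr
    have hpow : (n:ℝ)^(n+1) = (n:ℝ)^(n-r) * (n:ℝ)^(r+1) := by
      rw [← pow_add]; congr 1; omega
    set C := derNum (r-m) / ((r-m).factorial : ℝ) with hC
    rw [hpow, pow_succ]
    have h1 : ((n:ℝ)^r) ≠ 0 := pow_ne_zero _ hn0
    have h2 : ((n:ℝ)^(n-r)) ≠ 0 := pow_ne_zero _ hn0
    field_simp
  rw [hsum, hkey]
  have hsplit : ((n:ℝ)-1)^n = ((n:ℝ)-1)^(n-m) * ((n:ℝ)-1)^m := by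
    rw [← pow_add]; congr 1; omega
  have hnn : (n:ℝ)^(n+1) = (n:ℝ)^n * n := pow_succ _ _
  rw [div_pow, hnn, hsplit]
  have h1 : ((n:ℝ)^n) ≠ 0 := pow_ne_zero _ hn0
  have h2 : (((n:ℝ)-1)^m) ≠ 0 := pow_ne_zero _ hn1
  have h3 : (((n:ℝ)-1)^(n-m)) ≠ 0 := pow_ne_zero _ hn1
  field_simp
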